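/- With the notation of the previous statement, the sum of Weyl dimensions over Young diagrams λ of N boxes with at most r rows satisfying d(p_λ, p) ≤ x is at most (N+d−1)^{(2dr−r(r+1))/2 − m} · (4Nx + r)^{m+r−1}. -/

import Mathlib

open scoped Classical

/-- The Weyl dimension formula for the irreducible `GL(d)` representation labeled by a
Young diagram `λ = (λ_1 ≥ … ≥ λ_d ≥ 0)` (0-indexed here). -/
noncomputable def weylDim (d : ℕ) (lam : Fin d → ℕ) : ℝ :=
  (∏ p ∈ Finset.univ.filter (fun p : Fin d × Fin d => p.1 < p.2),
      ((lam p.1 : ℝ) - (lam p.2 : ℝ) - (p.1 : ℝ) + (p.2 : ℝ))) /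
    ∏ k ∈ Finset.range d, (Nat.factorial k : ℝ)

/-- The set of Young diagrams with `N` boxes and at most `r` rows, encoded as weakly
decreasing tuples of `r` entries in `{0, …, N}` summing to `N`. -/
noncomputable def youngDiagrams (N r : ℕ) : Finset (Fin r → Fin (N + 1)) :=
  Finset.univ.filter (fun lam =>
    (∀ i j : Fin r, i ≤ j → (lam j : ℕ) ≤ (lam i : ℕ)) ∧ ∑ i, (lam i : ℕ) = N)

/-- Extension of an `r`-row diagram to `d ≥ r` rows by appending zero rows. -/
def padDiagram (d r N : ℕ) (lam : Fin r → Fin (N + 1)) : Fin d → ℕ :=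
  fun i => if h : (i : ℕ) < r then (lam ⟨i, h⟩ : ℕ) else 0

/-- The total variation distance between the normalized diagram `λ/N` and the
spectrum `p`: `d(p_λ, p) = (1/2) ∑_i |λ_i/N - p_i|`. -/
noncomputable def tvDist (d N : ℕ) (lam : Fin d → ℕ) (p : Fin d → ℝ) : ℝ :=
  (1 / 2) * ∑ i, |(lam i : ℝ) / (N : ℝ) - p i|

/-- The degeneracy parameter `m = ∑_{i<r} μ_i`, with `μ_i = #{j > i : p_j = p_i}`. -/
noncomputable def degenCount (d r : ℕ) (p : Fin d → ℝ) : ℕ :=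
  ∑ i ∈ Finset.univ.filter (fun i : Fin d => (i : ℕ) < r),
    (Finset.univ.filter (fun j : Fin d => i < j ∧ p j = p i)).card

section AuxLemmas

open Finset

lemma range_filter_lt' (n k : ℕ) (h : k ≤ n) :
    (Finset.range n).filter (fun i => i < k) = Finset.range k := by
  ext i; simp only [Finset.mem_filter, Finset.mem_range]; omega

lemma card_filter_val_lt (n k : ℕ) (h : k ≤ n) :
    (Finset.univ.filter (fun i : Fin n => (i : ℕ) < k)).card = k := by
  rw [Finset.card_filter, Fin.sum_univ_eq_sum_range (fun i => if i < k then 1 else 0),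
    ← Finset.card_filter, range_filter_lt' n k h, Finset.card_range]

lemma card_filter_val_gt (n : ℕ) (i : Fin n) :
    (Finset.univ.filter (fun j : Fin n => i < j)).card = n - ((i : ℕ) + 1) := by
  have h1 : (Finset.univ.filter (fun j : Fin n => i < j)) =
      (Finset.univ.filter (fun j : Fin n => (i : ℕ) < (j : ℕ))) := by
    apply Finset.filter_congr; intro j _; exact Fin.lt_def
  rw [h1, Finset.card_filter, Fin.sum_univ_eq_sum_range (fun j => if (i:ℕ) < j then 1 else 0),
    ← Finset.card_filter]
  have h2 : (Finset.range n).filter (fun j => (i:ℕ) < j) = Finset.Ico ((i:ℕ)+1) n := by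
    ext j; simp only [Finset.mem_filter, Finset.mem_range, Finset.mem_Ico]; omega
  rw [h2, Nat.card_Ico]

lemma sum_aux (d r : ℕ) (hr : 1 ≤ r) (hrd : r ≤ d) :
    ∑ k ∈ Finset.range r, (d - (k + 1)) = (2 * d * r - r * (r + 1)) / 2 := by
  obtain ⟨s, rfl⟩ : ∃ s, r = s + 1 := ⟨r - 1, by omega⟩
  obtain ⟨e, rfl⟩ : ∃ e, d = (s + 1) + e := ⟨d - (s+1), by omega⟩
  rw [← Finset.sum_range_reflect]
  have h1 : ∀ k ∈ Finset.range (s+1), (s + 1 + e - (s + 1 - 1 - k + 1)) = e + k := by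
    intro k hk; simp only [Finset.mem_range] at hk; omega
  rw [Finset.sum_congr rfl h1, Finset.sum_add_distrib, Finset.sum_const, Finset.card_range,
    smul_eq_mul]
  have h2 : (∑ k ∈ Finset.range (s+1), k) * 2 = (s+1) * s := by
    rw [Finset.sum_range_id_mul_two]; simp
  have h3 : 2 * (s + 1 + e) * (s + 1) = (s+1) * ((s+1)+1) + ((s+1)*e*2 + (∑ k ∈ Finset.range (s+1), k) * 2) := by
    rw [h2]; ring
  rw [h3, Nat.add_sub_cancel_left]
  set a := (s+1)*e
  set b := ∑ k ∈ Finset.range (s+1), k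
  omega


lemma inner_fact (d : ℕ) (j : Fin d) :
    ∏ i : Fin d, (if i < j then ((j : ℝ) - (i : ℝ)) else 1) = ((j : ℕ).factorial : ℝ) := by
  have h0 : ∀ i : Fin d, (if i < j then ((j : ℝ) - (i : ℝ)) else 1)
      = (fun k : ℕ => if k < (j:ℕ) then ((j : ℝ) - (k : ℝ)) else 1) (i : ℕ) := by
    intro i; simp only [Fin.lt_def]
  rw [Finset.prod_congr rfl (fun i _ => h0 i),
    Fin.prod_univ_eq_prod_range (fun k : ℕ => if k < (j:ℕ) then ((j : ℝ) - (k : ℝ)) else 1) d]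
  rw [← Finset.prod_subset (Finset.range_subset_range.mpr (le_of_lt j.isLt))
    (by intro i _ hi; simp only [Finset.mem_range] at hi; rw [if_neg (by omega)])]
  have h1 : ∀ i ∈ Finset.range (j:ℕ), (if i < (j:ℕ) then ((j : ℝ) - (i : ℝ)) else 1)
      = (((j:ℕ) - i : ℕ) : ℝ) := by
    intro i hi; simp only [Finset.mem_range] at hi
    rw [if_pos hi, Nat.cast_sub (le_of_lt hi)]
  rw [Finset.prod_congr rfl h1, ← Nat.cast_prod]
  congr 1
  calc ∏ i ∈ Finset.range (j:ℕ), ((j:ℕ) - i)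
      = ∏ i ∈ Finset.range (j:ℕ), ((j:ℕ) - 1 - i + 1) := by
        apply Finset.prod_congr rfl; intro i hi; simp only [Finset.mem_range] at hi; omega
    _ = ∏ i ∈ Finset.range (j:ℕ), (i + 1) := Finset.prod_range_reflect (fun i => i + 1) (j:ℕ)
    _ = (j:ℕ).factorial := Finset.prod_range_add_one_eq_factorial (j:ℕ)

lemma vandermonde_zero (d : ℕ) :
    ∏ q ∈ Finset.univ.filter (fun q : Fin d × Fin d => q.1 < q.2),
      ((q.2 : ℝ) - (q.1 : ℝ)) = ∏ k ∈ Finset.range d, ((k.factorial : ℕ) : ℝ) := by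
  rw [Finset.prod_filter, ← Finset.univ_product_univ, Finset.prod_product_right]
  calc (∏ j : Fin d, ∏ i : Fin d, if (i, j).1 < (i, j).2 then ((j : ℝ) - (i : ℝ)) else 1)
      = ∏ j : Fin d, (((j:ℕ).factorial : ℕ) : ℝ) := by
        apply Finset.prod_congr rfl; intro j _; exact inner_fact d j
    _ = ∏ k ∈ Finset.range d, ((k.factorial : ℕ) : ℝ) :=
        Fin.prod_univ_eq_prod_range (fun k => ((k.factorial : ℕ) : ℝ)) d


lemma card_A (d r : ℕ) (p : Fin d → ℝ) :
    (Finset.univ.filter (fun q : Fin d × Fin d =>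
        q.1 < q.2 ∧ (q.1 : ℕ) < r ∧ p q.2 = p q.1)).card = degenCount d r p := by
  unfold degenCount
  rw [Finset.card_eq_sum_card_fiberwise
    (f := fun q : Fin d × Fin d => q.1)
    (t := Finset.univ.filter (fun i : Fin d => (i : ℕ) < r))
    (by intro q hq; simp only [Finset.mem_coe, Finset.mem_filter, Finset.mem_univ, true_and] at hq ⊢
        exact hq.2.1)]
  refine Finset.sum_congr rfl (fun i hi => ?_)
  simp only [Finset.mem_filter, Finset.mem_univ, true_and] at hi
  apply Finset.card_nbij' (fun q => q.2) (fun j => (i, j))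
  · intro q hq
    simp only [Finset.mem_coe, Finset.mem_filter, Finset.mem_univ, true_and] at hq ⊢
    rcases hq with ⟨⟨h1, h2, h3⟩, h4⟩
    rw [← h4]; exact ⟨h1, h3⟩
  · intro j hj
    simp only [Finset.mem_coe, Finset.mem_filter, Finset.mem_univ, true_and] at hj ⊢
    exact ⟨⟨hj.1, hi, hj.2⟩, trivial⟩
  · intro q hq
    simp only [Finset.mem_coe, Finset.mem_filter, Finset.mem_univ, true_and] at hq
    exact Prod.ext hq.2.symm rfl
  · intro j hj; rfl

lemma card_P (d r : ℕ) (hr : 1 ≤ r) (hrd : r ≤ d) :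
    (Finset.univ.filter (fun q : Fin d × Fin d =>
        q.1 < q.2 ∧ (q.1 : ℕ) < r)).card = (2 * d * r - r * (r + 1)) / 2 := by
  rw [Finset.card_eq_sum_card_fiberwise
    (f := fun q : Fin d × Fin d => q.1)
    (t := Finset.univ.filter (fun i : Fin d => (i : ℕ) < r))
    (by intro q hq; simp only [Finset.mem_coe, Finset.mem_filter, Finset.mem_univ, true_and] at hq ⊢
        exact hq.2)]
  have h1 : ∀ i ∈ Finset.univ.filter (fun i : Fin d => (i : ℕ) < r),
      ((Finset.univ.filter (fun q : Fin d × Fin d => q.1 < q.2 ∧ (q.1 : ℕ) < r)).filter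
        (fun q => q.1 = i)).card = d - ((i : ℕ) + 1) := by
    intro i hi
    simp only [Finset.mem_filter, Finset.mem_univ, true_and] at hi
    refine Eq.trans ?_ (card_filter_val_gt d i)
    apply Finset.card_nbij' (fun q => q.2) (fun j => (i, j))
    · intro q hq
      simp only [Finset.mem_coe, Finset.mem_filter, Finset.mem_univ, true_and] at hq ⊢
      rcases hq with ⟨⟨h2, h3⟩, h4⟩
      rw [← h4]; exact h2
    · intro j hj
      simp only [Finset.mem_coe, Finset.mem_filter, Finset.mem_univ, true_and] at hj ⊢
      exact ⟨⟨hj, hi⟩, trivial⟩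
    · intro q hq
      simp only [Finset.mem_coe, Finset.mem_filter, Finset.mem_univ, true_and] at hq
      exact Prod.ext hq.2.symm rfl
    · intro j hj; rfl
  rw [Finset.sum_congr rfl h1, ← sum_aux d r hr hrd]
  rw [Finset.sum_filter, Fin.sum_univ_eq_sum_range (fun k => if k < r then d - (k+1) else 0),
    ← Finset.sum_filter]
  congr 1
  ext i; simp only [Finset.mem_filter, Finset.mem_range]; omega


lemma weyl_term_bound (d r N : ℕ) (hr : 1 ≤ r) (hrd : r ≤ d) (hN : 1 ≤ N)
    (p : Fin d → ℝ)
    (hppos : ∀ i : Fin d, (i : ℕ) < r → 0 < p i)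
    (hpzero : ∀ i : Fin d, r ≤ (i : ℕ) → p i = 0)
    (x : ℝ) (hx : 0 < x) (lam : Fin r → Fin (N + 1))
    (hmono : ∀ i j : Fin r, i ≤ j → (lam j : ℕ) ≤ (lam i : ℕ))
    (hball : tvDist d N (padDiagram d r N lam) p ≤ x) :
    weylDim d (padDiagram d r N lam) ≤
      (4 * (N : ℝ) * x + r) ^ (degenCount d r p) *
        ((N : ℝ) + d - 1) ^ ((2 * d * r - r * (r + 1)) / 2 - degenCount d r p) := by
  set μ := padDiagram d r N lam with hμ
  have hNpos : (0 : ℝ) < N := by exact_mod_cast hN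
  -- basic facts about μ
  have hμle : ∀ i : Fin d, (μ i : ℝ) ≤ N := by
    intro i
    rw [hμ]; unfold padDiagram
    by_cases h : (i : ℕ) < r
    · rw [dif_pos h]
      exact_mod_cast Nat.lt_succ_iff.mp (lam ⟨i, h⟩).isLt
    · rw [dif_neg h]; exact_mod_cast Nat.zero_le N
  have hμmono : ∀ i j : Fin d, i ≤ j → μ j ≤ μ i := by
    intro i j hij
    rw [hμ]; unfold padDiagram
    by_cases hj : (j : ℕ) < r
    · have hi : (i : ℕ) < r := lt_of_le_of_lt (by exact_mod_cast hij) hj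
      rw [dif_pos hj, dif_pos hi]
      exact hmono ⟨i, hi⟩ ⟨j, hj⟩ (by exact_mod_cast hij)
    · rw [dif_neg hj]
      exact Nat.zero_le _
  have hcoord : ∀ k : Fin d, |(μ k : ℝ) / N - p k| ≤ 2 * x := by
    intro k
    have h1 : ∑ i, |(μ i : ℝ) / N - p i| ≤ 2 * x := by
      unfold tvDist at hball; linarith
    refine le_trans (Finset.single_le_sum (f := fun i : Fin d => |(μ i : ℝ) / N - p i|)
      (fun i _ => abs_nonneg _) (Finset.mem_univ k)) h1
  -- the three index sets
  set F := Finset.univ.filter (fun q : Fin d × Fin d => q.1 < q.2) with hF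
  set A := Finset.univ.filter (fun q : Fin d × Fin d =>
      q.1 < q.2 ∧ (q.1 : ℕ) < r ∧ p q.2 = p q.1) with hA
  set P := Finset.univ.filter (fun q : Fin d × Fin d =>
      q.1 < q.2 ∧ (q.1 : ℕ) < r) with hP
  have hAP : A ⊆ P := by
    intro q hq
    simp only [hA, hP, Finset.mem_filter] at hq ⊢
    tauto
  have hPF : P ⊆ F := by
    intro q hq
    simp only [hF, hP, Finset.mem_filter] at hq ⊢
    tauto
  set f : Fin d × Fin d → ℝ :=
    fun q => (μ q.1 : ℝ) - (μ q.2 : ℝ) - (q.1 : ℝ) + (q.2 : ℝ) with hf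
  -- positivity of factors
  have hfpos : ∀ q ∈ F, 0 ≤ f q := by
    intro q hq
    simp only [hF, Finset.mem_filter, Finset.mem_univ, true_and] at hq
    have h1 : μ q.2 ≤ μ q.1 := hμmono q.1 q.2 (le_of_lt hq)
    have h2 : ((q.1 : Fin d) : ℕ) < ((q.2 : Fin d) : ℕ) := hq
    have h3 : ((q.1 : Fin d) : ℝ) < ((q.2 : Fin d) : ℝ) := by exact_mod_cast h2
    have h4 : ((μ q.2 : ℕ) : ℝ) ≤ ((μ q.1 : ℕ) : ℝ) := by exact_mod_cast h1
    rw [hf]; dsimp only; linarith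
  -- bound on A factors
  have hAbound : ∀ q ∈ A, f q ≤ 4 * (N : ℝ) * x + r := by
    intro q hq
    simp only [hA, Finset.mem_filter, Finset.mem_univ, true_and] at hq
    obtain ⟨hlt, hir, hpeq⟩ := hq
    have hjr : ((q.2 : Fin d) : ℕ) < r := by
      by_contra hc
      have h0 := hppos q.1 hir
      rw [← hpeq, hpzero q.2 (le_of_not_gt hc)] at h0
      exact lt_irrefl 0 h0
    have e1 := (abs_le.mp (hcoord q.1)).2
    have e2 := (abs_le.mp (hcoord q.2)).1
    have h1 : (μ q.1 : ℝ) ≤ N * (p q.1 + 2 * x) := by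
      have := (div_le_iff₀ hNpos).mp (show (μ q.1 : ℝ) / N ≤ p q.1 + 2 * x by linarith)
      linarith
    have h2 : N * (p q.2 - 2 * x) ≤ (μ q.2 : ℝ) := by
      have := (le_div_iff₀ hNpos).mp (show p q.2 - 2 * x ≤ (μ q.2 : ℝ) / N by linarith)
      linarith
    have h3 : ((q.2 : Fin d) : ℝ) ≤ (r : ℝ) - 1 := by
      have : ((q.2 : Fin d) : ℕ) + 1 ≤ r := hjr
      have := (Nat.cast_le (α := ℝ)).mpr this
      push_cast at this; linarith
    have h4 : (0 : ℝ) ≤ ((q.1 : Fin d) : ℝ) := Nat.cast_nonneg _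
    rw [hf]; dsimp only
    rw [hpeq] at h2
    nlinarith [h1, h2, h3, h4]
  -- bound on P factors
  have hPbound : ∀ q ∈ P, f q ≤ (N : ℝ) + d - 1 := by
    intro q hq
    simp only [hP, Finset.mem_filter, Finset.mem_univ, true_and] at hq
    have h1 : (μ q.1 : ℝ) ≤ N := hμle q.1
    have h2 : (0 : ℝ) ≤ (μ q.2 : ℝ) := Nat.cast_nonneg _
    have h3 : ((q.2 : Fin d) : ℝ) ≤ (d : ℝ) - 1 := by
      have : ((q.2 : Fin d) : ℕ) + 1 ≤ d := q.2.isLt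
      have := (Nat.cast_le (α := ℝ)).mpr this
      push_cast at this; linarith
    have h4 : (0 : ℝ) ≤ ((q.1 : Fin d) : ℝ) := Nat.cast_nonneg _
    rw [hf]; dsimp only; linarith
  -- products
  have cA_nonneg : (0 : ℝ) ≤ 4 * (N : ℝ) * x + r := by positivity
  have cB_nonneg : (0 : ℝ) ≤ (N : ℝ) + d - 1 := by
    have : (1 : ℝ) ≤ N := by exact_mod_cast hN
    have : (0 : ℝ) ≤ (d : ℝ) := Nat.cast_nonneg _
    linarith [hNpos]
  have prodA : ∏ q ∈ A, f q ≤ (4 * (N : ℝ) * x + r) ^ (degenCount d r p) := by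
    rw [← card_A d r p, ← Finset.prod_const]
    exact Finset.prod_le_prod (fun q hq => hfpos q (hPF (hAP hq))) hAbound
  have prodA_nonneg : 0 ≤ ∏ q ∈ A, f q :=
    Finset.prod_nonneg (fun q hq => hfpos q (hPF (hAP hq)))
  have prodB : ∏ q ∈ P \ A, f q ≤
      ((N : ℝ) + d - 1) ^ ((2 * d * r - r * (r + 1)) / 2 - degenCount d r p) := by
    have hcard : (P \ A).card = (2 * d * r - r * (r + 1)) / 2 - degenCount d r p := by
      rw [Finset.card_sdiff_of_subset hAP, card_P d r hr hrd, card_A d r p]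
    rw [← hcard, ← Finset.prod_const]
    exact Finset.prod_le_prod
      (fun q hq => hfpos q (hPF (Finset.mem_sdiff.mp hq).1))
      (fun q hq => hPbound q (Finset.mem_sdiff.mp hq).1)
  have prodB_nonneg : 0 ≤ ∏ q ∈ P \ A, f q :=
    Finset.prod_nonneg (fun q hq => hfpos q (hPF (Finset.mem_sdiff.mp hq).1))
  -- the C product
  have hCeq : ∀ q ∈ F \ P, f q = ((q.2 : Fin d) : ℝ) - ((q.1 : Fin d) : ℝ) := by
    intro q hq
    rw [Finset.mem_sdiff] at hq
    obtain ⟨hqF, hqP⟩ := hq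
    simp only [hF, hP, Finset.mem_filter, Finset.mem_univ, true_and] at hqF hqP
    have hir : ¬ ((q.1 : Fin d) : ℕ) < r := fun h => hqP ⟨hqF, h⟩
    have hjr : ¬ ((q.2 : Fin d) : ℕ) < r := by
      intro h
      exact hir (lt_of_le_of_lt (le_of_lt (by exact_mod_cast hqF)) h)
    have h1 : μ q.1 = 0 := by rw [hμ]; unfold padDiagram; rw [dif_neg hir]
    have h2 : μ q.2 = 0 := by rw [hμ]; unfold padDiagram; rw [dif_neg hjr]
    rw [hf]; dsimp only; rw [h1, h2]; push_cast; ring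
  have hone : ∀ q ∈ F, (1 : ℝ) ≤ ((q.2 : Fin d) : ℝ) - ((q.1 : Fin d) : ℝ) := by
    intro q hq
    simp only [hF, Finset.mem_filter, Finset.mem_univ, true_and] at hq
    have : ((q.1 : Fin d) : ℕ) + 1 ≤ ((q.2 : Fin d) : ℕ) := hq
    have := (Nat.cast_le (α := ℝ)).mpr this
    push_cast at this; linarith
  have prodC : ∏ q ∈ F \ P, f q ≤ ∏ k ∈ Finset.range d, ((k.factorial : ℕ) : ℝ) := by
    rw [Finset.prod_congr rfl hCeq, ← vandermonde_zero d,
      ← Finset.prod_sdiff hPF]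
    have h1 : (0 : ℝ) ≤ ∏ q ∈ F \ P, (((q.2 : Fin d) : ℝ) - ((q.1 : Fin d) : ℝ)) :=
      Finset.prod_nonneg (fun q hq =>
        le_trans zero_le_one (hone q (Finset.mem_sdiff.mp hq).1))
    have h2 : (1 : ℝ) ≤ ∏ q ∈ P, (((q.2 : Fin d) : ℝ) - ((q.1 : Fin d) : ℝ)) := by
      calc (1 : ℝ) = ∏ q ∈ P, 1 := (Finset.prod_const_one).symm
        _ ≤ ∏ q ∈ P, (((q.2 : Fin d) : ℝ) - ((q.1 : Fin d) : ℝ)) :=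
          Finset.prod_le_prod (fun q _ => zero_le_one) (fun q hq => hone q (hPF hq))
    nlinarith [h1, h2]
  have prodC_nonneg : 0 ≤ ∏ q ∈ F \ P, f q :=
    Finset.prod_nonneg (fun q hq => hfpos q (Finset.mem_sdiff.mp hq).1)
  -- denominator
  have hDen : (0 : ℝ) < ∏ k ∈ Finset.range d, ((k.factorial : ℕ) : ℝ) :=
    Finset.prod_pos (fun k _ => by exact_mod_cast k.factorial_pos)
  -- combine
  have hNum : ∏ q ∈ F, f q ≤
      ((4 * (N : ℝ) * x + r) ^ (degenCount d r p) *
        ((N : ℝ) + d - 1) ^ ((2 * d * r - r * (r + 1)) / 2 - degenCount d r p)) *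
        ∏ k ∈ Finset.range d, ((k.factorial : ℕ) : ℝ) := by
    rw [← Finset.prod_sdiff hPF, ← Finset.prod_sdiff hAP]
    have hBA : (∏ q ∈ P \ A, f q) * ∏ q ∈ A, f q ≤
        ((N : ℝ) + d - 1) ^ ((2 * d * r - r * (r + 1)) / 2 - degenCount d r p) *
          ((4 * (N : ℝ) * x + r) ^ (degenCount d r p)) :=
      mul_le_mul prodB prodA prodA_nonneg (by positivity)
    calc (∏ q ∈ F \ P, f q) * ((∏ q ∈ P \ A, f q) * ∏ q ∈ A, f q)
        ≤ (∏ k ∈ Finset.range d, ((k.factorial : ℕ) : ℝ)) *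
            (((N : ℝ) + d - 1) ^ ((2 * d * r - r * (r + 1)) / 2 - degenCount d r p) *
              ((4 * (N : ℝ) * x + r) ^ (degenCount d r p))) := by
          apply mul_le_mul prodC hBA (by positivity) (le_of_lt hDen)
      _ = ((4 * (N : ℝ) * x + r) ^ (degenCount d r p) *
            ((N : ℝ) + d - 1) ^ ((2 * d * r - r * (r + 1)) / 2 - degenCount d r p)) *
            ∏ k ∈ Finset.range d, ((k.factorial : ℕ) : ℝ) := by ring
  -- finish
  unfold weylDim
  rw [div_le_iff₀ hDen]
  have : ∏ q ∈ Finset.univ.filter (fun q : Fin d × Fin d => q.1 < q.2),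
      ((μ q.1 : ℝ) - (μ q.2 : ℝ) - (q.1 : ℝ) + (q.2 : ℝ)) = ∏ q ∈ F, f q := rfl
  exact le_trans (le_of_eq this) hNum


lemma card_ball (d r N : ℕ) (hr : 1 ≤ r) (hrd : r ≤ d) (hN : 1 ≤ N)
    (p : Fin d → ℝ) (x : ℝ) (hx : 0 < x) :
    ((((youngDiagrams N r).filter
        (fun lam => tvDist d N (padDiagram d r N lam) p ≤ x)).card : ℝ))
      ≤ (4 * (N : ℝ) * x + 1) ^ (r - 1) := by
  have hNpos : (0 : ℝ) < N := by exact_mod_cast hN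
  set S := (youngDiagrams N r).filter
      (fun lam => tvDist d N (padDiagram d r N lam) p ≤ x) with hS
  set lo : Fin r → ℤ := fun i =>
    if (i : ℕ) < r - 1 then ⌈(N : ℝ) * p (Fin.castLE hrd i) - 2 * N * x⌉ else 0 with hlo
  set hi : Fin r → ℤ := fun i =>
    if (i : ℕ) < r - 1 then ⌊(N : ℝ) * p (Fin.castLE hrd i) + 2 * N * x⌋ else 0 with hhi
  set φ : (Fin r → Fin (N + 1)) → (Fin r → ℤ) :=
    fun lam i => if (i : ℕ) < r - 1 then ((lam i : ℕ) : ℤ) else 0 with hφ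
  -- coordinatewise bounds for members of S
  have hco : ∀ lam ∈ S, ∀ i : Fin r,
      (N : ℝ) * p (Fin.castLE hrd i) - 2 * N * x ≤ ((lam i : ℕ) : ℝ) ∧
      ((lam i : ℕ) : ℝ) ≤ (N : ℝ) * p (Fin.castLE hrd i) + 2 * N * x := by
    intro lam hlam i
    rw [hS, Finset.mem_filter] at hlam
    obtain ⟨-, hball⟩ := hlam
    have hpad : padDiagram d r N lam (Fin.castLE hrd i) = (lam i : ℕ) := by
      unfold padDiagram
      rw [dif_pos (show ((Fin.castLE hrd i : Fin d) : ℕ) < r from i.isLt)]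
      rfl
    have h1 : ∑ k, |(padDiagram d r N lam k : ℝ) / N - p k| ≤ 2 * x := by
      unfold tvDist at hball; linarith
    have h2 : |(padDiagram d r N lam (Fin.castLE hrd i) : ℝ) / N - p (Fin.castLE hrd i)| ≤ 2 * x :=
      le_trans (Finset.single_le_sum
        (f := fun k : Fin d => |(padDiagram d r N lam k : ℝ) / N - p k|)
        (fun k _ => abs_nonneg _) (Finset.mem_univ (Fin.castLE hrd i))) h1
    rw [hpad, abs_le] at h2
    constructor
    · have := (le_div_iff₀ hNpos).mp (show p (Fin.castLE hrd i) - 2 * x ≤ ((lam i : ℕ) : ℝ) / N by linarith [h2.1])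
      linarith
    · have := (div_le_iff₀ hNpos).mp (show ((lam i : ℕ) : ℝ) / N ≤ p (Fin.castLE hrd i) + 2 * x by linarith [h2.2])
      linarith
  -- injection into a box
  have hmem : ∀ lam ∈ S, φ lam ∈ Finset.Icc lo hi := by
    intro lam hlam
    rw [Finset.mem_Icc]
    constructor
    · rw [Pi.le_def]
      intro i
      by_cases h : (i : ℕ) < r - 1
      · simp only [hφ, hlo, if_pos h]
        refine Int.ceil_le.mpr ?_
        push_cast
        exact (hco lam hlam i).1
      · simp only [hφ, hlo, if_neg h]
        exact le_refl 0
    · rw [Pi.le_def]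
      intro i
      by_cases h : (i : ℕ) < r - 1
      · simp only [hφ, hhi, if_pos h]
        refine Int.le_floor.mpr ?_
        push_cast
        exact (hco lam hlam i).2
      · simp only [hφ, hhi, if_neg h]
        exact le_refl 0
  have hinj : Set.InjOn φ S := by
    intro lam hlam lam' hlam' heq
    have hlam1 : lam ∈ S := hlam
    have hlam1' : lam' ∈ S := hlam'
    rw [hS, Finset.mem_filter, youngDiagrams, Finset.mem_filter] at hlam1 hlam1'
    obtain ⟨⟨-, -, hsum⟩, -⟩ := hlam1
    obtain ⟨⟨-, -, hsum'⟩, -⟩ := hlam1'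
    have hvals : ∀ i : Fin r, (i : ℕ) < r - 1 → (lam i : ℕ) = (lam' i : ℕ) := by
      intro i hi'
      have := congrFun heq i
      rw [hφ] at this; dsimp only at this
      rw [if_pos hi', if_pos hi'] at this
      exact_mod_cast this
    have hlast : ∀ i : Fin r, ¬ (i : ℕ) < r - 1 → (lam i : ℕ) = (lam' i : ℕ) := by
      intro i hi'
      have hival : (i : ℕ) = r - 1 := by have := i.isLt; omega
      have e1 : (lam i : ℕ) + ∑ k ∈ Finset.univ.erase i, (lam k : ℕ) = N :=
        (Finset.add_sum_erase Finset.univ (fun k => (lam k : ℕ)) (Finset.mem_univ i)).trans hsum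
      have e2 : (lam' i : ℕ) + ∑ k ∈ Finset.univ.erase i, (lam' k : ℕ) = N :=
        (Finset.add_sum_erase Finset.univ (fun k => (lam' k : ℕ)) (Finset.mem_univ i)).trans hsum'
      have e3 : ∑ k ∈ Finset.univ.erase i, (lam k : ℕ)
          = ∑ k ∈ Finset.univ.erase i, (lam' k : ℕ) := by
        refine Finset.sum_congr rfl (fun k hk => ?_)
        rw [Finset.mem_erase] at hk
        refine hvals k ?_
        have : (k : ℕ) ≠ (i : ℕ) := fun hc => hk.1 (Fin.ext hc)
        have := k.isLt; omega
      omega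
    funext i
    refine Fin.ext ?_
    by_cases h : (i : ℕ) < r - 1
    · exact Fin.val_injective.eq_iff.mpr (Fin.ext (hvals i h)) ▸ hvals i h
    · exact hlast i h
  have hcard : S.card ≤ (Finset.Icc lo hi).card :=
    Finset.card_le_card_of_injOn φ hmem hinj
  have hboxcard : ((Finset.Icc lo hi).card : ℝ)
      = ∏ i : Fin r, (((Finset.Icc (lo i) (hi i)).card : ℕ) : ℝ) := by
    rw [Pi.card_Icc]; push_cast; rfl
  have hfac : ∀ i : Fin r, (((Finset.Icc (lo i) (hi i)).card : ℕ) : ℝ)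
      ≤ (if (i : ℕ) < r - 1 then 4 * (N : ℝ) * x + 1 else 1) := by
    intro i
    by_cases h : (i : ℕ) < r - 1
    · rw [if_pos h, Int.card_Icc]
      simp only [hlo, hhi, if_pos h]
      set a := (N : ℝ) * p (Fin.castLE hrd i) - 2 * N * x with ha
      set b := (N : ℝ) * p (Fin.castLE hrd i) + 2 * N * x with hb
      set z : ℤ := ⌊b⌋ + 1 - ⌈a⌉ with hz0
      have hpos : (0 : ℝ) ≤ 4 * (N : ℝ) * x + 1 := by positivity
      rcases le_or_gt z 0 with hz | hz
      · rw [Int.toNat_of_nonpos hz]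
        simpa using hpos
      · have h1 : (⌊b⌋ : ℝ) ≤ b := Int.floor_le b
        have h2 : a ≤ (⌈a⌉ : ℝ) := Int.le_ceil a
        have hba : b - a = 4 * (N : ℝ) * x := by simp only [ha, hb]; ring
        have h3 : ((z : ℤ) : ℝ) ≤ 4 * (N : ℝ) * x + 1 := by
          rw [hz0]; push_cast; linarith
        have h4 : ((z.toNat : ℕ) : ℝ) = ((z : ℤ) : ℝ) := by
          exact_mod_cast congrArg (fun t : ℤ => (t : ℝ)) (Int.toNat_of_nonneg hz.le)
        rw [h4]
        exact h3
    · rw [if_neg h]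
      simp only [hlo, hhi, if_neg h]
      simp
  have hprod : (∏ i : Fin r, (((Finset.Icc (lo i) (hi i)).card : ℕ) : ℝ))
      ≤ ∏ i : Fin r, (if (i : ℕ) < r - 1 then 4 * (N : ℝ) * x + 1 else 1) :=
    Finset.prod_le_prod (fun i _ => Nat.cast_nonneg _) (fun i _ => hfac i)
  have hpow : (∏ i : Fin r, (if (i : ℕ) < r - 1 then 4 * (N : ℝ) * x + 1 else 1))
      = (4 * (N : ℝ) * x + 1) ^ (r - 1) := by
    rw [← Finset.prod_filter, Finset.prod_const, card_filter_val_lt r (r - 1) (by omega)]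
  calc (S.card : ℝ) ≤ ((Finset.Icc lo hi).card : ℝ) := by exact_mod_cast hcard
    _ = ∏ i : Fin r, (((Finset.Icc (lo i) (hi i)).card : ℕ) : ℝ) := hboxcard
    _ ≤ (4 * (N : ℝ) * x + 1) ^ (r - 1) := by rw [← hpow]; exact hprod


end AuxLemmas

/-- With `p = (p_1, …, p_d)`, `p_1 ≥ … ≥ p_r > p_{r+1} = … = p_d = 0`, the sum of Weyl
dimensions over Young diagrams `λ` of `N` boxes with at most `r` rows satisfying
`d(p_λ, p) ≤ x` is at most `(N+d-1)^((2dr - r(r+1))/2 - m) ⬝ (4Nx + r)^(m+r-1)`. -/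
theorem total_dimension_ball_bound (d r N : ℕ) (hr : 1 ≤ r) (hrd : r ≤ d) (hN : 1 ≤ N)
    (p : Fin d → ℝ) (hpmono : ∀ i j : Fin d, i ≤ j → p j ≤ p i)
    (hppos : ∀ i : Fin d, (i : ℕ) < r → 0 < p i)
    (hpzero : ∀ i : Fin d, r ≤ (i : ℕ) → p i = 0)
    (x : ℝ) (hx : 0 < x) :
    ∑ lam ∈ (youngDiagrams N r).filter
        (fun lam => tvDist d N (padDiagram d r N lam) p ≤ x),
      weylDim d (padDiagram d r N lam)
    ≤ ((N : ℝ) + d - 1) ^ ((2 * d * r - r * (r + 1)) / 2 - degenCount d r p) *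
        (4 * (N : ℝ) * x + r) ^ (degenCount d r p + r - 1) := by
  classical
  set m := degenCount d r p with hm
  set E := (2 * d * r - r * (r + 1)) / 2 - m with hE
  set cA : ℝ := 4 * (N : ℝ) * x + r with hcA
  set cB : ℝ := (N : ℝ) + d - 1 with hcB
  have hNpos : (0 : ℝ) < N := by exact_mod_cast hN
  have hrpos : (1 : ℝ) ≤ r := by exact_mod_cast hr
  have hcA_nonneg : (0 : ℝ) ≤ cA := by rw [hcA]; positivity
  have hcB_nonneg : (0 : ℝ) ≤ cB := by
    rw [hcB]
    have h1 : (1 : ℝ) ≤ (N : ℝ) := by exact_mod_cast hN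
    have h2 : (0 : ℝ) ≤ (d : ℝ) := Nat.cast_nonneg _
    linarith
  set S := (youngDiagrams N r).filter
      (fun lam => tvDist d N (padDiagram d r N lam) p ≤ x) with hS
  have hterm : ∀ lam ∈ S, weylDim d (padDiagram d r N lam) ≤ cA ^ m * cB ^ E := by
    intro lam hlam
    rw [hS, Finset.mem_filter] at hlam
    obtain ⟨hY, hball⟩ := hlam
    rw [youngDiagrams, Finset.mem_filter] at hY
    exact weyl_term_bound d r N hr hrd hN p hppos hpzero x hx lam hY.2.1 hball
  have hsum : ∑ lam ∈ S, weylDim d (padDiagram d r N lam) ≤ (S.card : ℝ) * (cA ^ m * cB ^ E) := by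
    calc ∑ lam ∈ S, weylDim d (padDiagram d r N lam) ≤ ∑ _lam ∈ S, cA ^ m * cB ^ E :=
          Finset.sum_le_sum hterm
      _ = (S.card : ℝ) * (cA ^ m * cB ^ E) := by rw [Finset.sum_const, nsmul_eq_mul]
  have hcard : (S.card : ℝ) ≤ (4 * (N : ℝ) * x + 1) ^ (r - 1) :=
    card_ball d r N hr hrd hN p x hx
  have hcard2 : (S.card : ℝ) ≤ cA ^ (r - 1) := by
    refine le_trans hcard (pow_le_pow_left₀ (by positivity) ?_ _)
    rw [hcA]; linarith
  have hmul : (S.card : ℝ) * (cA ^ m * cB ^ E) ≤ cA ^ (r - 1) * (cA ^ m * cB ^ E) :=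
    mul_le_mul_of_nonneg_right hcard2 (by positivity)
  refine le_trans hsum (le_trans hmul (le_of_eq ?_))
  rw [show m + r - 1 = m + (r - 1) by omega, pow_add]
  ring
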